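/- arXiv:2406.10919 — 3 statements merged into one kernel-verified Lean document; each statement's English description precedes it below -/
import Mathlib

section
/- Let α, β > 1 be real numbers and let f : [0,1] → [0,1] be the base-change-transformation, defined by f(0) = 0 and f(⟨d_i⟩_α) = ⟨d_i⟩_β. Then f is strictly increasing on [0,1]. -/
/-- The α-expansion value ⟨d_i⟩_α = ∑_{i=1}^∞ (α-1)^{i-1} α^{-(d_1+⋯+d_i)},
with the digit sequence `d : ℕ → ℕ` indexed from 0 (so `d 0` is the first digit). -/
noncomputable def alphaExpansion (α : ℝ) (d : ℕ → ℕ) : ℝ :=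
  ∑' i : ℕ, (α - 1) ^ i * α ^ (-((∑ j ∈ Finset.range (i + 1), d j : ℕ) : ℤ))

open Finset


noncomputable def bcDigit (α x : ℝ) : ℕ := (⌊-Real.logb α x⌋).toNat + 1

noncomputable def bcTail (α x : ℝ) : ℝ := (x * α ^ (bcDigit α x) - 1) / (α - 1)

noncomputable def bcDigits (α x : ℝ) (i : ℕ) : ℕ := bcDigit α ((bcTail α)^[i] x)

lemma bcDigit_pos (α x : ℝ) : 1 ≤ bcDigit α x := Nat.le_add_left 1 _

lemma bcDigit_lt {α x : ℝ} (hα : 1 < α) (hx : 0 < x) (hx1 : x ≤ 1) :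
    α ^ (-(bcDigit α x : ℤ)) < x := by
  have hlog : Real.logb α x ≤ 0 := Real.logb_nonpos hα hx.le hx1
  have hk : (⌊-Real.logb α x⌋ : ℝ) ≤ -Real.logb α x := Int.floor_le _
  have hk0 : (0:ℤ) ≤ ⌊-Real.logb α x⌋ := Int.floor_nonneg.2 (by linarith)
  have hd : ((bcDigit α x : ℤ) : ℝ) = (⌊-Real.logb α x⌋ : ℝ) + 1 := by
    simp [bcDigit, Int.toNat_of_nonneg hk0]
  have h1 : -((bcDigit α x : ℤ) : ℝ) < Real.logb α x := by
    have := Int.lt_floor_add_one (-Real.logb α x)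
    rw [hd]; linarith
  calc α ^ (-(bcDigit α x : ℤ)) = α ^ (((-(bcDigit α x : ℤ)) : ℝ)) := by rw [← Real.rpow_intCast]; push_cast; ring_nf
    _ < α ^ (Real.logb α x) := by
        apply (Real.rpow_lt_rpow_left_iff hα).2
        push_cast
        push_cast at h1
        linarith
    _ = x := Real.rpow_logb (by linarith) (by linarith) hx

lemma bcDigit_ge {α x : ℝ} (hα : 1 < α) (hx : 0 < x) (hx1 : x ≤ 1) :
    x ≤ α ^ (1 - (bcDigit α x : ℤ)) := by
  have hlog : Real.logb α x ≤ 0 := Real.logb_nonpos hα hx.le hx1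
  have hk : (⌊-Real.logb α x⌋ : ℝ) ≤ -Real.logb α x := Int.floor_le _
  have hk0 : (0:ℤ) ≤ ⌊-Real.logb α x⌋ := Int.floor_nonneg.2 (by linarith)
  have hd : ((bcDigit α x : ℤ) : ℝ) = (⌊-Real.logb α x⌋ : ℝ) + 1 := by
    simp [bcDigit, Int.toNat_of_nonneg hk0]
  calc x = α ^ (Real.logb α x) := (Real.rpow_logb (by linarith) (by linarith) hx).symm
    _ ≤ α ^ ((1 - (bcDigit α x : ℤ) : ℤ) : ℝ) := by
        apply (Real.rpow_le_rpow_left_iff hα).2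
        push_cast
        push_cast at hd
        linarith
    _ = α ^ (1 - (bcDigit α x : ℤ)) := Real.rpow_intCast _ _
lemma bcTail_mem {α x : ℝ} (hα : 1 < α) (hx : 0 < x) (hx1 : x ≤ 1) :
    0 < bcTail α x ∧ bcTail α x ≤ 1 := by
  have hαpos : (0:ℝ) < α := by linarith
  have hpow : (0:ℝ) < α ^ (bcDigit α x) := pow_pos hαpos _
  have hlt := bcDigit_lt hα hx hx1
  have hge := bcDigit_ge hα hx hx1
  have h1 : 1 < x * α ^ (bcDigit α x) := by
    have : α ^ (-(bcDigit α x : ℤ)) * α ^ ((bcDigit α x : ℤ)) < x * α ^ (bcDigit α x) := by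
      rw [zpow_natCast]
      exact mul_lt_mul_of_pos_right hlt hpow
    rwa [← zpow_add₀ (ne_of_gt hαpos), neg_add_cancel, zpow_zero] at this
  have h2 : x * α ^ (bcDigit α x) ≤ α := by
    calc x * α ^ (bcDigit α x) ≤ α ^ (1 - (bcDigit α x : ℤ)) * α ^ ((bcDigit α x : ℤ)) := by
          rw [zpow_natCast]
          exact mul_le_mul_of_nonneg_right hge hpow.le
      _ = α := by rw [← zpow_add₀ (ne_of_gt hαpos)]; ring_nf; exact zpow_one α
  constructor
  · apply div_pos (by linarith) (by linarith)
  · rw [bcTail, div_le_one (by linarith)]; linarith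

lemma bcTail_eq {α x : ℝ} (hα : 1 < α) :
    x = α ^ (-(bcDigit α x : ℤ)) + (α - 1) * α ^ (-(bcDigit α x : ℤ)) * bcTail α x := by
  have hαpos : (0:ℝ) < α := by linarith
  have hpow : (0:ℝ) < α ^ (bcDigit α x) := pow_pos hαpos _
  have hz : α ^ (-(bcDigit α x : ℤ)) = (α ^ (bcDigit α x))⁻¹ := by
    rw [zpow_neg, zpow_natCast]
  have h2 : (α - 1) ≠ 0 := by linarith
  have key : (α - 1) * ((x * α ^ bcDigit α x - 1) / (α - 1)) = x * α ^ bcDigit α x - 1 := by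
    field_simp
  rw [bcTail, hz, mul_comm (α - 1) ((α ^ bcDigit α x)⁻¹), mul_assoc, key]
  field_simp
  ring
noncomputable def bcTerm (γ : ℝ) (d : ℕ → ℕ) (i : ℕ) : ℝ :=
  (γ - 1) ^ i * γ ^ (-((∑ j ∈ Finset.range (i + 1), d j : ℕ) : ℤ))

lemma alphaExpansion_eq (γ : ℝ) (d : ℕ → ℕ) : alphaExpansion γ d = ∑' i, bcTerm γ d i := rfl

lemma bcTerm_pos {γ : ℝ} (hγ : 1 < γ) (d : ℕ → ℕ) (i : ℕ) : 0 < bcTerm γ d i :=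
  mul_pos (pow_pos (by linarith) _) (zpow_pos (by linarith) _)

lemma bc_sum_ge (d : ℕ → ℕ) (hd : ∀ i, 1 ≤ d i) (i : ℕ) :
    (i + 1 : ℕ) ≤ ∑ j ∈ Finset.range (i + 1), d j := by
  calc (i + 1 : ℕ) = ∑ j ∈ Finset.range (i + 1), 1 := by simp
    _ ≤ ∑ j ∈ Finset.range (i + 1), d j := Finset.sum_le_sum fun j _ => hd j

lemma bcTerm_le {γ : ℝ} (hγ : 1 < γ) {d : ℕ → ℕ} (hd : ∀ i, 1 ≤ d i) (i : ℕ) :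
    bcTerm γ d i ≤ ((γ - 1) / γ) ^ i * γ⁻¹ := by
  have hγ0 : (0:ℝ) < γ := by linarith
  have h1 : γ ^ (-((∑ j ∈ Finset.range (i + 1), d j : ℕ) : ℤ)) ≤ γ ^ (-((i+1 : ℕ) : ℤ)) := by
    apply zpow_le_zpow_right₀ hγ.le
    have := bc_sum_ge d hd i
    omega
  have h2 : γ ^ (-((i+1 : ℕ) : ℤ)) = (γ ^ i * γ)⁻¹ := by
    rw [zpow_neg, zpow_natCast, pow_succ]
  calc bcTerm γ d i ≤ (γ - 1) ^ i * γ ^ (-((i+1 : ℕ) : ℤ)) :=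
        mul_le_mul_of_nonneg_left h1 (pow_nonneg (by linarith) _)
    _ = ((γ - 1) / γ) ^ i * γ⁻¹ := by
        rw [h2, div_pow]
        field_simp
    _ ≤ ((γ - 1) / γ) ^ i * γ⁻¹ := le_refl _

lemma bc_ratio_mem {γ : ℝ} (hγ : 1 < γ) : 0 ≤ (γ - 1) / γ ∧ (γ - 1) / γ < 1 := by
  constructor
  · apply div_nonneg (by linarith) (by linarith)
  · rw [div_lt_one (by linarith)]; linarith

lemma summable_bcTerm {γ : ℝ} (hγ : 1 < γ) {d : ℕ → ℕ} (hd : ∀ i, 1 ≤ d i) :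
    Summable (bcTerm γ d) := by
  obtain ⟨hr0, hr1⟩ := bc_ratio_mem hγ
  exact Summable.of_nonneg_of_le (fun i => (bcTerm_pos hγ d i).le) (bcTerm_le hγ hd)
    ((summable_geometric_of_lt_one hr0 hr1).mul_right γ⁻¹)

lemma expansion_pos {γ : ℝ} (hγ : 1 < γ) {d : ℕ → ℕ} (hd : ∀ i, 1 ≤ d i) :
    0 < alphaExpansion γ d := by
  rw [alphaExpansion_eq]
  exact Summable.tsum_pos (summable_bcTerm hγ hd) (fun i => (bcTerm_pos hγ d i).le) 0 (bcTerm_pos hγ d 0)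

lemma expansion_le_one {γ : ℝ} (hγ : 1 < γ) {d : ℕ → ℕ} (hd : ∀ i, 1 ≤ d i) :
    alphaExpansion γ d ≤ 1 := by
  obtain ⟨hr0, hr1⟩ := bc_ratio_mem hγ
  have hγ0 : (0:ℝ) < γ := by linarith
  rw [alphaExpansion_eq]
  calc ∑' i, bcTerm γ d i ≤ ∑' i, ((γ - 1) / γ) ^ i * γ⁻¹ :=
        Summable.tsum_le_tsum (bcTerm_le hγ hd) (summable_bcTerm hγ hd)
          ((summable_geometric_of_lt_one hr0 hr1).mul_right γ⁻¹)
    _ = (1 - (γ - 1) / γ)⁻¹ * γ⁻¹ := by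
        rw [tsum_mul_right, tsum_geometric_of_lt_one hr0 hr1]
    _ = 1 := by
        have : 1 - (γ - 1) / γ = γ⁻¹ := by field_simp; ring
        rw [this, inv_inv, mul_inv_cancel₀ (ne_of_gt hγ0)]

lemma expansion_shift {γ : ℝ} (hγ : 1 < γ) {d : ℕ → ℕ} (hd : ∀ i, 1 ≤ d i) :
    alphaExpansion γ d = γ ^ (-(d 0 : ℤ))
      + (γ - 1) * γ ^ (-(d 0 : ℤ)) * alphaExpansion γ (fun i => d (i + 1)) := by
  have hγ0 : (0:ℝ) ≠ γ := by linarith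
  rw [alphaExpansion_eq, Summable.tsum_eq_zero_add (summable_bcTerm hγ hd)]
  congr 1
  · simp [bcTerm]
  · rw [alphaExpansion_eq, ← tsum_mul_left]
    apply tsum_congr
    intro b
    have hsum : ∑ j ∈ Finset.range (b + 1 + 1), d j
        = (∑ j ∈ Finset.range (b + 1), d (j + 1)) + d 0 := Finset.sum_range_succ' d (b + 1)
    rw [bcTerm, bcTerm, hsum, pow_succ]
    push_cast
    rw [neg_add, zpow_add₀ (by linarith : (γ:ℝ) ≠ 0)]
    ring
lemma expansion_lt {γ : ℝ} (hγ : 1 < γ) :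
    ∀ (n : ℕ) (d e : ℕ → ℕ), (∀ i, 1 ≤ d i) → (∀ i, 1 ≤ e i) →
      (∀ j, j < n → d j = e j) → e n < d n →
      alphaExpansion γ d < alphaExpansion γ e := by
  intro n
  induction n with
  | zero =>
    intro d e hd he _ hlt
    have hγ0 : (0:ℝ) < γ := by linarith
    have hγne : (γ:ℝ) ≠ 0 := ne_of_gt hγ0
    have hEd : alphaExpansion γ d ≤ γ ^ (1 - (d 0 : ℤ)) := by
      rw [expansion_shift hγ hd]
      have h1 : alphaExpansion γ (fun i => d (i+1)) ≤ 1 :=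
        expansion_le_one hγ (fun i => hd (i+1))
      have hp : (0:ℝ) < γ ^ (-(d 0 : ℤ)) := zpow_pos hγ0 _
      have h2 : (γ:ℝ) ^ (1 - (d 0 : ℤ)) = γ * γ ^ (-(d 0 : ℤ)) := by
        rw [sub_eq_add_neg, zpow_add₀ hγne, zpow_one]
      rw [h2]
      have h3 : (γ - 1) * γ ^ (-(d 0 : ℤ)) * alphaExpansion γ (fun i => d (i+1))
          ≤ (γ - 1) * γ ^ (-(d 0 : ℤ)) * 1 :=
        mul_le_mul_of_nonneg_left h1 (mul_nonneg (by linarith) hp.le)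
      linarith
    have hEe : γ ^ (-(e 0 : ℤ)) < alphaExpansion γ e := by
      rw [expansion_shift hγ he]
      have hp : (0:ℝ) < (γ - 1) * γ ^ (-(e 0 : ℤ)) *
          alphaExpansion γ (fun i => e (i+1)) :=
        mul_pos (mul_pos (by linarith) (zpow_pos hγ0 _))
          (expansion_pos hγ (fun i => he (i+1)))
      linarith
    have hmid : γ ^ (1 - (d 0 : ℤ)) ≤ γ ^ (-(e 0 : ℤ)) :=
      zpow_le_zpow_right₀ hγ.le (by omega)
    linarith
  | succ n ih =>
    intro d e hd he hag hlt
    have h0 : d 0 = e 0 := hag 0 (Nat.succ_pos n)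
    have htail := ih (fun i => d (i+1)) (fun i => e (i+1)) (fun i => hd _) (fun i => he _)
        (fun j hj => hag (j+1) (by omega)) hlt
    rw [expansion_shift hγ hd, expansion_shift hγ he, h0]
    have hp : (0:ℝ) < (γ - 1) * γ ^ (-(e 0 : ℤ)) :=
      mul_pos (by linarith) (zpow_pos (by linarith) _)
    exact (add_lt_add_iff_left _).2 (mul_lt_mul_of_pos_left htail hp)

lemma bcDigits_pos (α x : ℝ) (i : ℕ) : 1 ≤ bcDigits α x i := bcDigit_pos _ _

lemma bcDigits_shift (α x : ℝ) :
    (fun i => bcDigits α x (i + 1)) = bcDigits α (bcTail α x) := by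
  funext i
  rw [bcDigits, bcDigits, Function.iterate_succ_apply]

lemma expansion_bcDigits_bound {α : ℝ} (hα : 1 < α) :
    ∀ (n : ℕ) (x : ℝ), 0 < x → x ≤ 1 →
      |alphaExpansion α (bcDigits α x) - x| ≤ 2 * ((α - 1) / α) ^ n := by
  intro n
  induction n with
  | zero =>
    intro x hx hx1
    have h1 : alphaExpansion α (bcDigits α x) ≤ 1 := expansion_le_one hα (bcDigits_pos α x)
    have h2 : 0 < alphaExpansion α (bcDigits α x) := expansion_pos hα (bcDigits_pos α x)
    rw [pow_zero, mul_one, abs_le]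
    constructor <;> linarith
  | succ n ih =>
    intro x hx hx1
    obtain ⟨hT0, hT1⟩ := bcTail_mem hα hx hx1
    have hrec := ih (bcTail α x) hT0 hT1
    have hα0 : (0:ℝ) < α := by linarith
    have hkey : alphaExpansion α (bcDigits α x) - x
        = (α - 1) * α ^ (-(bcDigit α x : ℤ)) *
          (alphaExpansion α (bcDigits α (bcTail α x)) - bcTail α x) := by
      have h1 := expansion_shift hα (bcDigits_pos α x)
      rw [bcDigits_shift] at h1
      have h2 : bcDigits α x 0 = bcDigit α x := by rw [bcDigits]; rfl
      rw [h2] at h1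
      have hx' := bcTail_eq hα (x := x)
      rw [h1]
      linear_combination -hx'
    have hd1 : 1 ≤ bcDigit α x := bcDigit_pos α x
    have hzle : α ^ (-(bcDigit α x : ℤ)) ≤ α⁻¹ := by
      have : α ^ (-(bcDigit α x : ℤ)) ≤ α ^ (-1 : ℤ) :=
        zpow_le_zpow_right₀ hα.le (by omega)
      rwa [zpow_neg_one] at this
    have hc0 : (0:ℝ) ≤ (α - 1) * α ^ (-(bcDigit α x : ℤ)) :=
      mul_nonneg (by linarith) (zpow_pos hα0 _).le
    have hcle : (α - 1) * α ^ (-(bcDigit α x : ℤ)) ≤ (α - 1) / α := by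
      rw [div_eq_mul_inv]
      exact mul_le_mul_of_nonneg_left hzle (by linarith)
    rw [hkey, abs_mul, abs_of_nonneg hc0]
    calc (α - 1) * α ^ (-(bcDigit α x : ℤ)) *
          |alphaExpansion α (bcDigits α (bcTail α x)) - bcTail α x|
        ≤ ((α - 1) / α) * (2 * ((α - 1) / α) ^ n) := by
          apply mul_le_mul hcle hrec (abs_nonneg _)
          exact div_nonneg (by linarith) (by linarith)
      _ = 2 * ((α - 1) / α) ^ (n + 1) := by ring
lemma expansion_bcDigits {α : ℝ} (hα : 1 < α) (x : ℝ) (hx : 0 < x) (hx1 : x ≤ 1) :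
    alphaExpansion α (bcDigits α x) = x := by
  obtain ⟨hr0, hr1⟩ := bc_ratio_mem hα
  have habs : ∀ n : ℕ, |alphaExpansion α (bcDigits α x) - x| ≤ 2 * ((α - 1) / α) ^ n :=
    fun n => expansion_bcDigits_bound hα n x hx hx1
  have htend : Filter.Tendsto (fun n : ℕ => 2 * ((α - 1) / α) ^ n)
      Filter.atTop (nhds 0) := by
    have := tendsto_pow_atTop_nhds_zero_of_lt_one hr0 hr1
    simpa using this.const_mul 2
  have hle : |alphaExpansion α (bcDigits α x) - x| ≤ 0 := ge_of_tendsto' htend habs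
  have := abs_nonneg (alphaExpansion α (bcDigits α x) - x)
  have h0 : |alphaExpansion α (bcDigits α x) - x| = 0 := le_antisymm hle this
  rw [abs_eq_zero, sub_eq_zero] at h0
  exact h0

theorem base_change_strictMonoOn (α β : ℝ) (hα : 1 < α) (hβ : 1 < β)
    (f : ℝ → ℝ) (hf0 : f 0 = 0)
    (hf : ∀ d : ℕ → ℕ, (∀ i, 1 ≤ d i) →
      f (alphaExpansion α d) = alphaExpansion β d) :
    StrictMonoOn f (Set.Icc (0 : ℝ) 1) := by
  intro x hx y hy hxy
  have hfval : ∀ z : ℝ, 0 < z → z ≤ 1 → f z = alphaExpansion β (bcDigits α z) := by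
    intro z hz hz1
    conv_lhs => rw [← expansion_bcDigits hα z hz hz1]
    exact hf _ (bcDigits_pos α z)
  have hy0 : 0 < y := lt_of_le_of_lt hx.1 hxy
  rcases eq_or_lt_of_le hx.1 with h0 | hx0
  · rw [← h0, hf0, hfval y hy0 hy.2]
    exact expansion_pos hβ (bcDigits_pos α y)
  · rw [hfval x hx0 hx.2, hfval y hy0 hy.2]
    have hxr := expansion_bcDigits hα x hx0 hx.2
    have hyr := expansion_bcDigits hα y hy0 hy.2
    have hne : ∃ n, bcDigits α x n ≠ bcDigits α y n := by
      by_contra h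
      push_neg at h
      have : bcDigits α x = bcDigits α y := funext h
      rw [← hxr, ← hyr, this] at hxy
      exact lt_irrefl _ hxy
    set n := Nat.find hne with hn
    have hspec : bcDigits α x n ≠ bcDigits α y n := Nat.find_spec hne
    have hmin : ∀ j, j < n → bcDigits α x j = bcDigits α y j := fun j hj =>
      not_not.1 (Nat.find_min hne hj)
    rcases lt_trichotomy (bcDigits α x n) (bcDigits α y n) with h | h | h
    · exfalso
      have := expansion_lt hα n (bcDigits α y) (bcDigits α x)
        (bcDigits_pos α y) (bcDigits_pos α x) (fun j hj => (hmin j hj).symm) h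
      rw [hxr, hyr] at this
      linarith
    · exact absurd h hspec
    · exact expansion_lt hβ n (bcDigits α x) (bcDigits α y)
        (bcDigits_pos α x) (bcDigits_pos α y) hmin h
end

section
/- Let α, β > 1 be real numbers and let f : [0,1] → [0,1] be the base-change-transformation, defined by f(0) = 0 and f(⟨d_i⟩_α) = ⟨d_i⟩_β. Then f is continuous on [0,1]. -/
lemma term_nonneg {α : ℝ} (hα : 1 < α) (d : ℕ → ℕ) (i : ℕ) :
    0 ≤ (α - 1) ^ i * α ^ (-((∑ j ∈ Finset.range (i + 1), d j : ℕ) : ℤ)) := by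
  have h0 : (0:ℝ) < α := lt_trans one_pos hα
  have h1 : (0:ℝ) ≤ α - 1 := by linarith
  positivity

lemma term_le {α : ℝ} (hα : 1 < α) {d : ℕ → ℕ} (hd : ∀ i, 1 ≤ d i) (i : ℕ) :
    (α - 1) ^ i * α ^ (-((∑ j ∈ Finset.range (i + 1), d j : ℕ) : ℤ))
    ≤ ((α - 1)/α) ^ i * (1/α) := by
  have h0 : (0:ℝ) < α := lt_trans one_pos hα
  have h1 : (0:ℝ) ≤ α - 1 := by linarith
  have hS : (i + 1 : ℤ) ≤ ((∑ j ∈ Finset.range (i + 1), d j : ℕ) : ℤ) := by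
    have : i + 1 ≤ ∑ j ∈ Finset.range (i + 1), d j := by
      calc i + 1 = ∑ j ∈ Finset.range (i+1), 1 := by simp
      _ ≤ _ := Finset.sum_le_sum (fun j _ => hd j)
    exact_mod_cast this
  have hz : α ^ (-((∑ j ∈ Finset.range (i + 1), d j : ℕ) : ℤ)) ≤ α ^ (-(i+1:ℤ)) :=
    zpow_le_zpow_right₀ hα.le (by linarith)
  have h2 : α ^ (-(i+1:ℤ)) = (1/α)^i * (1/α) := by
    rw [zpow_neg, show ((i:ℤ)+1) = ((i+1:ℕ):ℤ) by push_cast; ring, zpow_natCast,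
      ← inv_pow, pow_succ, one_div]
  calc (α - 1) ^ i * α ^ (-((∑ j ∈ Finset.range (i + 1), d j : ℕ) : ℤ))
      ≤ (α - 1) ^ i * ((1/α)^i * (1/α)) := by
        rw [← h2]; exact mul_le_mul_of_nonneg_left hz (by positivity)
    _ = ((α - 1)/α) ^ i * (1/α) := by rw [div_pow, div_pow, one_pow]; ring

lemma summable_term {α : ℝ} (hα : 1 < α) {d : ℕ → ℕ} (hd : ∀ i, 1 ≤ d i) :
    Summable (fun i : ℕ => (α - 1) ^ i * α ^ (-((∑ j ∈ Finset.range (i + 1), d j : ℕ) : ℤ))) := by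
  have h0 : (0:ℝ) < α := lt_trans one_pos hα
  have hr : (α-1)/α < 1 := by rw [div_lt_one h0]; linarith
  have hr0 : 0 ≤ (α-1)/α := by apply div_nonneg <;> linarith
  exact Summable.of_nonneg_of_le (term_nonneg hα d) (term_le hα hd)
    ((summable_geometric_of_lt_one hr0 hr).mul_right _)

lemma value_pos {α : ℝ} (hα : 1 < α) {d : ℕ → ℕ} (hd : ∀ i, 1 ≤ d i) :
    0 < alphaExpansion α d := by
  have h0 : (0:ℝ) < α := lt_trans one_pos hα
  exact Summable.tsum_pos (summable_term hα hd) (term_nonneg hα d) 0 (by positivity)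

lemma value_le_one {α : ℝ} (hα : 1 < α) {d : ℕ → ℕ} (hd : ∀ i, 1 ≤ d i) :
    alphaExpansion α d ≤ 1 := by
  have h0 : (0:ℝ) < α := lt_trans one_pos hα
  have hr : (α-1)/α < 1 := by rw [div_lt_one h0]; linarith
  have hr0 : 0 ≤ (α-1)/α := by apply div_nonneg <;> linarith
  have hgeo : ∑' i : ℕ, ((α-1)/α)^i * (1/α) = 1 := by
    rw [tsum_mul_right, tsum_geometric_of_lt_one hr0 hr]
    field_simp
    ring
  calc alphaExpansion α d ≤ ∑' i : ℕ, ((α-1)/α)^i * (1/α) :=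
        Summable.tsum_le_tsum (term_le hα hd) (summable_term hα hd)
          ((summable_geometric_of_lt_one hr0 hr).mul_right _)
    _ = 1 := hgeo

lemma shift_one {α : ℝ} (hα : 1 < α) {d : ℕ → ℕ} (hd : ∀ i, 1 ≤ d i) :
    alphaExpansion α d
      = α ^ (-(d 0:ℤ)) + (α - 1) * α ^ (-(d 0:ℤ)) * alphaExpansion α (fun i => d (i+1)) := by
  have h0 : (0:ℝ) < α := lt_trans one_pos hα
  have hne : α ≠ 0 := ne_of_gt h0
  unfold alphaExpansion
  rw [Summable.tsum_eq_zero_add (summable_term hα hd)]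
  congr 1
  · simp
  · rw [← tsum_mul_left]
    apply tsum_congr
    intro i
    have hsum : ∑ j ∈ Finset.range (i + 1 + 1), d j
        = (∑ j ∈ Finset.range (i + 1), d (j+1)) + d 0 := Finset.sum_range_succ' d (i+1)
    rw [hsum]
    push_cast
    rw [neg_add, zpow_add₀ hne, pow_succ]
    ring

lemma value_gt_fst {α : ℝ} (hα : 1 < α) {d : ℕ → ℕ} (hd : ∀ i, 1 ≤ d i) :
    α ^ (-(d 0:ℤ)) < alphaExpansion α d := by
  have h0 : (0:ℝ) < α := lt_trans one_pos hα
  rw [shift_one hα hd]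
  have h1 : 0 < alphaExpansion α (fun i => d (i+1)) := value_pos hα (fun i => hd (i+1))
  have := mul_pos (mul_pos (show (0:ℝ) < α - 1 by linarith) (zpow_pos h0 (-(d 0:ℤ)))) h1
  linarith

lemma value_le_fst {α : ℝ} (hα : 1 < α) {d : ℕ → ℕ} (hd : ∀ i, 1 ≤ d i) :
    alphaExpansion α d ≤ α ^ (1-(d 0:ℤ)) := by
  have h0 : (0:ℝ) < α := lt_trans one_pos hα
  rw [shift_one hα hd]
  have h1 : alphaExpansion α (fun i => d (i+1)) ≤ 1 := value_le_one hα (fun i => hd (i+1))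
  have h2 : 0 < alphaExpansion α (fun i => d (i+1)) := value_pos hα (fun i => hd (i+1))
  have h3 : α ^ (1-(d 0:ℤ)) = α * α ^ (-(d 0:ℤ)) := by
    rw [sub_eq_add_neg, zpow_add₀ (ne_of_gt h0), zpow_one]
  rw [h3]
  have hz := zpow_pos h0 (-(d 0:ℤ))
  have : (α - 1) * α ^ (-(d 0:ℤ)) * alphaExpansion α (fun i => d (i+1))
      ≤ (α - 1) * α ^ (-(d 0:ℤ)) * 1 :=
    mul_le_mul_of_nonneg_left h1 (mul_nonneg (by linarith) hz.le)
  linarith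

lemma value_lt_of_fst {α : ℝ} (hα : 1 < α) {d e : ℕ → ℕ} (hd : ∀ i, 1 ≤ d i)
    (he : ∀ i, 1 ≤ e i) (h : d 0 < e 0) : alphaExpansion α e < alphaExpansion α d := by
  have h0 : (0:ℝ) < α := lt_trans one_pos hα
  have h1 : alphaExpansion α e ≤ α ^ (1-(e 0:ℤ)) := value_le_fst hα he
  have h2 : α ^ (1-(e 0:ℤ)) ≤ α ^ (-(d 0:ℤ)) := by
    apply zpow_le_zpow_right₀ hα.le
    have : (d 0 : ℤ) + 1 ≤ (e 0 : ℤ) := by exact_mod_cast h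
    linarith
  exact lt_of_le_of_lt (le_trans h1 h2) (value_gt_fst hα hd)

lemma shift_k {α : ℝ} (hα : 1 < α) {d : ℕ → ℕ} (hd : ∀ i, 1 ≤ d i) (k : ℕ) :
    alphaExpansion α d
      = (∑ i ∈ Finset.range k, (α - 1) ^ i * α ^ (-((∑ j ∈ Finset.range (i + 1), d j : ℕ) : ℤ)))
        + (α - 1) ^ k * α ^ (-((∑ j ∈ Finset.range k, d j : ℕ) : ℤ))
          * alphaExpansion α (fun i => d (i + k)) := by
  have h0 : (0:ℝ) < α := lt_trans one_pos hα
  have hne : α ≠ 0 := ne_of_gt h0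
  induction k with
  | zero => simp
  | succ k ih =>
    rw [ih, Finset.sum_range_succ]
    have hdk : ∀ i, 1 ≤ (fun i => d (i + k)) i := fun i => hd (i + k)
    rw [shift_one hα hdk]
    have hco : (fun i => (fun j => d (j + k)) (i+1)) = (fun i => d (i + (k+1))) := by
      funext i; simp [add_assoc, add_comm 1 k]
    rw [hco]
    have hsum : ∑ j ∈ Finset.range (k + 1), d j = (∑ j ∈ Finset.range k, d j) + d k :=
      Finset.sum_range_succ d k
    rw [hsum]
    push_cast
    rw [neg_add, zpow_add₀ hne, pow_succ]
    simp only [show (fun j => d (j + k)) 0 = d k from by simp]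
    ring

lemma cross_lt {α β : ℝ} (hα : 1 < α) (hβ : 1 < β) {d e : ℕ → ℕ}
    (hd : ∀ i, 1 ≤ d i) (he : ∀ i, 1 ≤ e i)
    (h : alphaExpansion α d < alphaExpansion α e) :
    alphaExpansion β d < alphaExpansion β e := by
  classical
  have hne : d ≠ e := by rintro rfl; exact lt_irrefl _ h
  have hex : ∃ j, d j ≠ e j := Function.ne_iff.mp hne
  set i := Nat.find hex with hi_def
  have hi : d i ≠ e i := Nat.find_spec hex
  have hmin : ∀ j < i, d j = e j := fun j hj => not_not.mp (Nat.find_min hex hj)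
  -- prefixes agree
  have hpre : ∀ m ≤ i, ∑ j ∈ Finset.range m, d j = ∑ j ∈ Finset.range m, e j := by
    intro m hm
    apply Finset.sum_congr rfl
    intro j hj
    exact hmin j (lt_of_lt_of_le (Finset.mem_range.mp hj) hm)
  have hterm : ∀ γ : ℝ, ∀ j ∈ Finset.range i,
      (γ - 1) ^ j * γ ^ (-((∑ k ∈ Finset.range (j + 1), d k : ℕ) : ℤ))
        = (γ - 1) ^ j * γ ^ (-((∑ k ∈ Finset.range (j + 1), e k : ℕ) : ℤ)) := by
    intro γ j hj
    rw [hpre (j+1) (Nat.succ_le_of_lt (Finset.mem_range.mp hj))]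
  have hd' : ∀ j, 1 ≤ (fun k => d (k + i)) j := fun j => hd _
  have he' : ∀ j, 1 ≤ (fun k => e (k + i)) j := fun j => he _
  have key : ∀ γ : ℝ, 1 < γ → (alphaExpansion γ d < alphaExpansion γ e ↔
      alphaExpansion γ (fun k => d (k + i)) < alphaExpansion γ (fun k => e (k + i))) := by
    intro γ hγ
    have h0 : (0:ℝ) < γ := lt_trans one_pos hγ
    rw [shift_k hγ hd i, shift_k hγ he i,
      Finset.sum_congr rfl (hterm γ), hpre i le_rfl]
    have hK : 0 < (γ - 1) ^ i * γ ^ (-((∑ j ∈ Finset.range i, e j : ℕ) : ℤ)) := by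
      have : (0:ℝ) < γ - 1 := by linarith
      positivity
    constructor
    · intro hlt
      exact lt_of_mul_lt_mul_left (by linarith) hK.le
    · intro hlt
      have := mul_lt_mul_of_pos_left hlt hK
      linarith
  -- from h : compare first digits of shifted sequences
  have hsh : alphaExpansion α (fun k => d (k + i)) < alphaExpansion α (fun k => e (k + i)) :=
    (key α hα).mp h
  have hdi : e i < d i := by
    rcases lt_trichotomy (d i) (e i) with hlt | heq | hgt
    · have hlt0 : (fun k => d (k + i)) 0 < (fun k => e (k + i)) 0 := by simpa using hlt
      exact absurd (value_lt_of_fst hα hd' he' hlt0) (not_lt.mpr hsh.le)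
    · exact absurd heq hi
    · exact hgt
  have hβsh : alphaExpansion β (fun k => d (k + i)) < alphaExpansion β (fun k => e (k + i)) := by
    have : (fun k => e (k + i)) 0 < (fun k => d (k + i)) 0 := by simpa using hdi
    exact value_lt_of_fst hβ he' hd' this
  exact (key β hβ).mpr hβsh

open Classical in
noncomputable def expDigit (α x : ℝ) : ℕ :=
  if h : ∃ n : ℕ, α ^ (-(n:ℤ)) < x then Nat.find h else 1

noncomputable def expStep (α x : ℝ) : ℝ := (α ^ (expDigit α x : ℤ) * x - 1) / (α - 1)

lemma expDigit_exists {α x : ℝ} (hα : 1 < α) (hx : 0 < x) : ∃ n : ℕ, α ^ (-(n:ℤ)) < x := by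
  obtain ⟨n, hn⟩ := pow_unbounded_of_one_lt x⁻¹ hα
  refine ⟨n, ?_⟩
  have h0 : (0:ℝ) < α := lt_trans one_pos hα
  rw [zpow_neg, zpow_natCast]
  have hpow : (0:ℝ) < α ^ n := by positivity
  exact (inv_lt_comm₀ hpow hx).mpr hn

lemma expDigit_lt {α x : ℝ} (hα : 1 < α) (hx : 0 < x) : α ^ (-(expDigit α x:ℤ)) < x := by
  classical
  rw [expDigit, dif_pos (expDigit_exists hα hx)]
  exact Nat.find_spec (expDigit_exists hα hx)

lemma expDigit_pos {α x : ℝ} (hα : 1 < α) (hx : 0 < x) (hx1 : x ≤ 1) : 1 ≤ expDigit α x := by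
  by_contra hcon
  have h : expDigit α x = 0 := by omega
  have := expDigit_lt hα hx
  rw [h] at this
  simp at this
  linarith

lemma expDigit_le {α x : ℝ} (hα : 1 < α) (hx : 0 < x) (hx1 : x ≤ 1) :
    x ≤ α ^ (1-(expDigit α x:ℤ)) := by
  classical
  have hex := expDigit_exists hα hx
  have h1 := expDigit_pos hα hx hx1
  by_contra hcon
  push_neg at hcon
  have hfind : expDigit α x = Nat.find hex := by
    rw [expDigit, dif_pos hex]
  have hmin := Nat.find_min hex (m := expDigit α x - 1) (by omega)
  apply hmin
  have hc1 : ((expDigit α x - 1 : ℕ) : ℤ) = (expDigit α x : ℤ) - 1 := by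
    push_cast [Nat.cast_sub h1]; ring
  have hc2 : -((expDigit α x : ℤ) - 1) = 1 - (expDigit α x : ℤ) := by ring
  rw [hc1, hc2]
  exact hcon

lemma expStep_identity {α x : ℝ} (hα : 1 < α) (hx : 0 < x) :
    x = α ^ (-(expDigit α x:ℤ)) + (α - 1) * α ^ (-(expDigit α x:ℤ)) * expStep α x := by
  have h0 : (0:ℝ) < α := lt_trans one_pos hα
  have h1 : α - 1 ≠ 0 := by linarith
  have hz : α ^ (-(expDigit α x:ℤ)) = (α ^ (expDigit α x:ℤ))⁻¹ := zpow_neg α _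
  have hzne : α ^ (expDigit α x:ℤ) ≠ 0 := ne_of_gt (zpow_pos h0 _)
  rw [expStep, hz]
  field_simp
  ring

lemma expStep_mem {α x : ℝ} (hα : 1 < α) (hx : 0 < x) (hx1 : x ≤ 1) :
    0 < expStep α x ∧ expStep α x ≤ 1 := by
  have h0 : (0:ℝ) < α := lt_trans one_pos hα
  have h1 : (0:ℝ) < α - 1 := by linarith
  have hzpos : (0:ℝ) < α ^ (expDigit α x:ℤ) := zpow_pos h0 _
  unfold expStep
  constructor
  · apply div_pos _ h1
    have := expDigit_lt hα hx
    rw [zpow_neg] at this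
    have := (inv_lt_iff_one_lt_mul₀ hzpos).mp this
    linarith [mul_comm x (α ^ (expDigit α x:ℤ))]
  · rw [div_le_one h1]
    have hle := expDigit_le hα hx hx1
    have : α ^ (expDigit α x:ℤ) * x ≤ α ^ (expDigit α x:ℤ) * α ^ (1-(expDigit α x:ℤ)) :=
      mul_le_mul_of_nonneg_left hle hzpos.le
    rw [← zpow_add₀ (ne_of_gt h0)] at this
    simp at this
    rw [zpow_natCast]
    linarith

noncomputable def expDigits (α x : ℝ) : ℕ → ℕ := fun i => expDigit α ((expStep α)^[i] x)

lemma iter_mem {α x : ℝ} (hα : 1 < α) (hx : 0 < x) (hx1 : x ≤ 1) (k : ℕ) :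
    0 < (expStep α)^[k] x ∧ (expStep α)^[k] x ≤ 1 := by
  induction k with
  | zero => exact ⟨hx, hx1⟩
  | succ k ih =>
    rw [Function.iterate_succ_apply']
    exact expStep_mem hα ih.1 ih.2

lemma expDigits_ge_one {α x : ℝ} (hα : 1 < α) (hx : 0 < x) (hx1 : x ≤ 1) (i : ℕ) :
    1 ≤ expDigits α x i :=
  expDigit_pos hα (iter_mem hα hx hx1 i).1 (iter_mem hα hx hx1 i).2

lemma partial_identity {α x : ℝ} (hα : 1 < α) (hx : 0 < x) (hx1 : x ≤ 1) (k : ℕ) :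
    x = (∑ i ∈ Finset.range k,
          (α - 1) ^ i * α ^ (-((∑ j ∈ Finset.range (i + 1), expDigits α x j : ℕ) : ℤ)))
        + (α - 1) ^ k * α ^ (-((∑ j ∈ Finset.range k, expDigits α x j : ℕ) : ℤ))
          * (expStep α)^[k] x := by
  have h0 : (0:ℝ) < α := lt_trans one_pos hα
  have hne : α ≠ 0 := ne_of_gt h0
  induction k with
  | zero => simp
  | succ k ih =>
    have hy := iter_mem hα hx hx1 k
    have hid := expStep_identity hα hy.1
    have hitsucc : (expStep α)^[k+1] x = expStep α ((expStep α)^[k] x) :=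
      Function.iterate_succ_apply' _ _ _
    have hdk : expDigit α ((expStep α)^[k] x) = expDigits α x k := rfl
    have hsum : ∑ j ∈ Finset.range (k + 1), expDigits α x j
        = (∑ j ∈ Finset.range k, expDigits α x j) + expDigits α x k :=
      Finset.sum_range_succ _ k
    have key : (α - 1) ^ k * α ^ (-((∑ j ∈ Finset.range k, expDigits α x j : ℕ) : ℤ))
          * (expStep α)^[k] x
        = (α - 1) ^ k * α ^ (-((∑ j ∈ Finset.range (k + 1), expDigits α x j : ℕ) : ℤ))
          + (α - 1) ^ (k+1) * α ^ (-((∑ j ∈ Finset.range (k+1), expDigits α x j : ℕ) : ℤ))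
            * (expStep α)^[k+1] x := by
      rw [hdk] at hid
      rw [hitsucc, hsum]
      push_cast
      rw [neg_add, zpow_add₀ hne, pow_succ]
      conv_lhs => rw [hid]
      ring
    rw [Finset.sum_range_succ (fun i => (α - 1) ^ i * α ^ (-((∑ j ∈ Finset.range (i + 1), expDigits α x j : ℕ) : ℤ)))]
    rw [key] at ih
    linarith [ih]

lemma expansion_eq {α x : ℝ} (hα : 1 < α) (hx : 0 < x) (hx1 : x ≤ 1) :
    alphaExpansion α (expDigits α x) = x := by
  have h0 : (0:ℝ) < α := lt_trans one_pos hα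
  have h1 : (0:ℝ) < α - 1 := by linarith
  set d := expDigits α x with hd_def
  have hd : ∀ i, 1 ≤ d i := expDigits_ge_one hα hx hx1
  have hsummable := summable_term hα hd
  have htsum : Filter.Tendsto
      (fun k => ∑ i ∈ Finset.range k,
        (α - 1) ^ i * α ^ (-((∑ j ∈ Finset.range (i + 1), d j : ℕ) : ℤ)))
      Filter.atTop (nhds (alphaExpansion α d)) :=
    hsummable.hasSum.tendsto_sum_nat
  have hrem : ∀ k, 0 ≤ x - (∑ i ∈ Finset.range k,
        (α - 1) ^ i * α ^ (-((∑ j ∈ Finset.range (i + 1), d j : ℕ) : ℤ)))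
      ∧ x - (∑ i ∈ Finset.range k,
        (α - 1) ^ i * α ^ (-((∑ j ∈ Finset.range (i + 1), d j : ℕ) : ℤ)))
        ≤ ((α-1)/α)^k := by
    intro k
    have hpi := partial_identity hα hx hx1 k
    have hT := iter_mem hα hx hx1 k
    have hSk : (k : ℤ) ≤ ((∑ j ∈ Finset.range k, d j : ℕ) : ℤ) := by
      have : k ≤ ∑ j ∈ Finset.range k, d j := by
        calc k = ∑ j ∈ Finset.range k, 1 := by simp
        _ ≤ _ := Finset.sum_le_sum (fun j _ => hd j)
      exact_mod_cast this
    have hz1 : α ^ (-((∑ j ∈ Finset.range k, d j : ℕ) : ℤ)) ≤ α ^ (-(k:ℤ)) :=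
      zpow_le_zpow_right₀ hα.le (by linarith)
    have hz0 : (0:ℝ) < α ^ (-((∑ j ∈ Finset.range k, d j : ℕ) : ℤ)) := zpow_pos h0 _
    have heq : x - (∑ i ∈ Finset.range k,
        (α - 1) ^ i * α ^ (-((∑ j ∈ Finset.range (i + 1), d j : ℕ) : ℤ)))
        = (α - 1) ^ k * α ^ (-((∑ j ∈ Finset.range k, d j : ℕ) : ℤ)) * (expStep α)^[k] x := by
      linarith [hpi]
    constructor
    · rw [heq]
      exact mul_nonneg (mul_nonneg (pow_nonneg h1.le k) hz0.le) hT.1.le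
    · rw [heq]
      have hzk : α ^ (-(k:ℤ)) = (α^k)⁻¹ := by rw [zpow_neg, zpow_natCast]
      have hr : ((α-1)/α)^k = (α-1)^k * (α^k)⁻¹ := by
        rw [div_pow]; rw [div_eq_mul_inv]
      rw [hr]
      calc (α - 1) ^ k * α ^ (-((∑ j ∈ Finset.range k, d j : ℕ) : ℤ)) * (expStep α)^[k] x
          ≤ (α - 1) ^ k * α ^ (-((∑ j ∈ Finset.range k, d j : ℕ) : ℤ)) * 1 :=
            mul_le_mul_of_nonneg_left hT.2 (by positivity)
        _ = (α - 1) ^ k * α ^ (-((∑ j ∈ Finset.range k, d j : ℕ) : ℤ)) := mul_one _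
        _ ≤ (α - 1) ^ k * α ^ (-(k:ℤ)) := mul_le_mul_of_nonneg_left hz1 (by positivity)
        _ = (α - 1) ^ k * (α^k)⁻¹ := by rw [hzk]
  have hrtend : Filter.Tendsto (fun k : ℕ => ((α-1)/α)^k) Filter.atTop (nhds 0) := by
    apply tendsto_pow_atTop_nhds_zero_of_lt_one
    · positivity
    · rw [div_lt_one h0]; linarith
  have hdiff : Filter.Tendsto (fun k => x - (∑ i ∈ Finset.range k,
        (α - 1) ^ i * α ^ (-((∑ j ∈ Finset.range (i + 1), d j : ℕ) : ℤ))))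
      Filter.atTop (nhds 0) :=
    squeeze_zero (fun k => (hrem k).1) (fun k => (hrem k).2) hrtend
  have hx_tend : Filter.Tendsto
      (fun k => ∑ i ∈ Finset.range k,
        (α - 1) ^ i * α ^ (-((∑ j ∈ Finset.range (i + 1), d j : ℕ) : ℤ)))
      Filter.atTop (nhds x) := by
    have := Filter.Tendsto.const_sub x hdiff
    simpa using this
  exact tendsto_nhds_unique htsum hx_tend

lemma ones_value {α : ℝ} (hα : 1 < α) : alphaExpansion α (fun _ => 1) = 1 := by
  have h0 : (0:ℝ) < α := lt_trans one_pos hα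
  have h := shift_one hα (d := fun _ => 1) (fun _ => le_refl 1)
  set E := alphaExpansion α (fun _ => 1) with hE
  have h1 : (-(((fun _ => 1 : ℕ → ℕ) 0 : ℕ) : ℤ)) = -1 := by norm_num
  rw [h1, zpow_neg_one] at h
  have hne : α ≠ 0 := ne_of_gt h0
  field_simp at h
  nlinarith [h]

theorem base_change_continuousOn (α β : ℝ) (hα : 1 < α) (hβ : 1 < β)
    (f : ℝ → ℝ) (hf0 : f 0 = 0)
    (hf : ∀ d : ℕ → ℕ, (∀ i, 1 ≤ d i) →
      f (alphaExpansion α d) = alphaExpansion β d) :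
    ContinuousOn f (Set.Icc (0 : ℝ) 1) := by
  -- f on (0,1] equals the base-change value
  have hmap : ∀ x : ℝ, 0 < x → x ≤ 1 → f x = alphaExpansion β (expDigits α x) := by
    intro x hx hx1
    have := hf (expDigits α x) (expDigits_ge_one hα hx hx1)
    rwa [expansion_eq hα hx hx1] at this
  have hf1 : f 1 = 1 := by
    have := hf (fun _ => 1) (fun _ => le_refl 1)
    rw [ones_value hα, ones_value hβ] at this
    exact this
  have hpos : ∀ x : ℝ, 0 < x → x ≤ 1 → 0 < f x := by
    intro x hx hx1
    rw [hmap x hx hx1]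
    exact value_pos hβ (expDigits_ge_one hα hx hx1)
  have hle1 : ∀ x : ℝ, 0 < x → x ≤ 1 → f x ≤ 1 := by
    intro x hx hx1
    rw [hmap x hx hx1]
    exact value_le_one hβ (expDigits_ge_one hα hx hx1)
  have hsm : ∀ x y : ℝ, 0 < x → x < y → y ≤ 1 → f x < f y := by
    intro x y hx hxy hy1
    have hx1 : x ≤ 1 := le_trans hxy.le hy1
    have hy : 0 < y := lt_trans hx hxy
    rw [hmap x hx hx1, hmap y hy hy1]
    apply cross_lt hα hβ (expDigits_ge_one hα hx hx1) (expDigits_ge_one hα hy hy1)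
    rw [expansion_eq hα hx hx1, expansion_eq hα hy hy1]
    exact hxy
  set g : ℝ → ℝ := fun x => if x ≤ 0 then x else if 1 ≤ x then x else f x with hg_def
  have hgval : ∀ z : ℝ, 0 ≤ g z ∨ z ≤ 0 := by
    intro z
    by_cases hz : z ≤ 0
    · right; exact hz
    · left
      simp only [hg_def]
      rw [if_neg hz]
      by_cases hz1 : 1 ≤ z
      · rw [if_pos hz1]; linarith
      · rw [if_neg hz1]; push_neg at hz hz1
        exact (hpos z hz hz1.le).le
  have hg_mono : Monotone g := by
    intro a b hab
    simp only [hg_def]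
    by_cases ha0 : a ≤ 0
    · rw [if_pos ha0]
      by_cases hb0 : b ≤ 0
      · rw [if_pos hb0]; exact hab
      · rw [if_neg hb0]
        push_neg at hb0
        by_cases hb1 : 1 ≤ b
        · rw [if_pos hb1]; exact hab
        · rw [if_neg hb1]; push_neg at hb1
          linarith [hpos b hb0 hb1.le]
    · rw [if_neg ha0]
      push_neg at ha0
      have hb0 : ¬ b ≤ 0 := by push_neg; linarith
      rw [if_neg hb0]
      by_cases ha1 : 1 ≤ a
      · rw [if_pos ha1]
        have hb1 : 1 ≤ b := le_trans ha1 hab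
        rw [if_pos hb1]; exact hab
      · rw [if_neg ha1]
        push_neg at ha1
        by_cases hb1 : 1 ≤ b
        · rw [if_pos hb1]
          linarith [hle1 a ha0 ha1.le]
        · rw [if_neg hb1]
          push_neg at hb1
          rcases eq_or_lt_of_le hab with rfl | hlt
          · exact le_refl _
          · exact (hsm a b ha0 hlt hb1.le).le
  have hg_surj : Function.Surjective g := by
    intro t
    rcases le_or_gt t 0 with ht | ht
    · exact ⟨t, by simp [hg_def, ht]⟩
    rcases le_or_gt 1 t with ht1 | ht1
    · refine ⟨t, ?_⟩
      simp only [hg_def]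
      rw [if_neg (by linarith), if_pos ht1]
    · -- 0 < t < 1
      set x := alphaExpansion α (expDigits β t) with hx_def
      have hdig := expDigits_ge_one hβ ht ht1.le
      have hx : 0 < x := value_pos hα hdig
      have hx1 : x ≤ 1 := value_le_one hα hdig
      have hfx : f x = t := by
        have := hf (expDigits β t) hdig
        rw [expansion_eq hβ ht ht1.le] at this
        exact this
      have hxlt1 : x < 1 := by
        rcases lt_or_eq_of_le hx1 with h | h
        · exact h
        · exfalso; rw [h, hf1] at hfx; linarith
      refine ⟨x, ?_⟩
      simp only [hg_def]
      rw [if_neg (by linarith), if_neg (by linarith)]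
      exact hfx
  have hg_cont : Continuous g := Monotone.continuous_of_surjective hg_mono hg_surj
  apply (hg_cont.continuousOn (s := Set.Icc (0:ℝ) 1)).congr
  intro x hx
  obtain ⟨hx0, hx1⟩ := hx
  simp only [hg_def]
  rcases eq_or_lt_of_le hx0 with rfl | hxpos
  · simp [hf0]
  · rw [if_neg (by linarith)]
    rcases eq_or_lt_of_le hx1 with rfl | hxlt
    · rw [if_pos le_rfl, hf1]
    · rw [if_neg (by linarith)]
end

section
/- Let α, β > 1 be real numbers, let f : [0,1] → [0,1] be the base-change-transformation (f(0) = 0, f(⟨d_i⟩_α) = ⟨d_i⟩_β), and let F = {(x, f(x)) : x ∈ [0,1]} ⊆ [0,1]² be its graph. For each positive integer i define the affine contraction G_i : [0,1]² → [0,1]² by G_i(x,y) = (((α−1)/α^i)x + 1/α^i, ((β−1)/β^i)y + 1/β^i). Then F is infinite self-affine, i.e., F = ⋃_{i=1}^∞ G_i(F) ∪ {(0,0)} (indeed ⋃_{i=1}^∞ G_i(F) = F ∖ {(0,0)} together with its closure point), and the Hausdorff dimension of F equals one. -/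
open MeasureTheory

/-- The affine contraction
G_i(x,y) = (((α−1)/α^i)x + 1/α^i, ((β−1)/β^i)y + 1/β^i). -/
noncomputable def affG (α β : ℝ) (i : ℕ) (p : ℝ × ℝ) : ℝ × ℝ :=
  ((α - 1) / α ^ i * p.1 + 1 / α ^ i, (β - 1) / β ^ i * p.2 + 1 / β ^ i)



namespace AE

variable {a : ℝ}

noncomputable def term (a : ℝ) (d : ℕ → ℕ) (i : ℕ) : ℝ :=
  (a - 1) ^ i * a ^ (-((∑ j ∈ Finset.range (i + 1), d j : ℕ) : ℤ))

lemma alphaExpansion_eq (a : ℝ) (d : ℕ → ℕ) : alphaExpansion a d = ∑' i, term a d i := rfl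

lemma sum_range_ge (d : ℕ → ℕ) (hd : ∀ i, 1 ≤ d i) (n : ℕ) :
    n ≤ ∑ j ∈ Finset.range n, d j := by
  calc n = ∑ j ∈ Finset.range n, 1 := by simp
  _ ≤ _ := Finset.sum_le_sum fun j _ => hd j

lemma term_nonneg (ha : 1 < a) (d : ℕ → ℕ) (i : ℕ) : 0 ≤ term a d i := by
  have h0 : (0:ℝ) < a := by linarith
  exact mul_nonneg (pow_nonneg (by linarith) _) (zpow_nonneg h0.le _)

lemma term_le (ha : 1 < a) (d : ℕ → ℕ) (hd : ∀ i, 1 ≤ d i) (i : ℕ) :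
    term a d i ≤ ((a - 1) / a) ^ i * (1 / a) := by
  have h0 : (0:ℝ) < a := by linarith
  have hS : (i + 1 : ℤ) ≤ ((∑ j ∈ Finset.range (i + 1), d j : ℕ) : ℤ) := by
    exact_mod_cast sum_range_ge d hd (i + 1)
  have hz : a ^ (-((∑ j ∈ Finset.range (i + 1), d j : ℕ) : ℤ)) ≤ a ^ (-(i + 1 : ℤ)) :=
    zpow_le_zpow_right₀ ha.le (by linarith)
  have h2 : term a d i ≤ (a - 1) ^ i * a ^ (-(i + 1 : ℤ)) :=
    mul_le_mul_of_nonneg_left hz (pow_nonneg (by linarith) _)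
  refine h2.trans_eq ?_
  rw [zpow_neg, show ((i:ℤ) + 1) = ((i+1:ℕ):ℤ) by push_cast; ring, zpow_natCast, div_pow, pow_succ]
  field_simp

lemma summable (ha : 1 < a) (d : ℕ → ℕ) (hd : ∀ i, 1 ≤ d i) : Summable (term a d) := by
  have h0 : (0:ℝ) < a := by linarith
  have hr0 : (0:ℝ) ≤ (a - 1) / a := div_nonneg (by linarith) h0.le
  have hr1 : (a - 1) / a < 1 := (div_lt_one h0).2 (by linarith)
  exact Summable.of_nonneg_of_le (term_nonneg ha d)
    (term_le ha d hd)
    (((summable_geometric_of_lt_one hr0 hr1)).mul_right _)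

lemma tsum_geom (ha : 1 < a) : ∑' i : ℕ, ((a - 1) / a) ^ i * (1 / a) = 1 := by
  have h0 : (0:ℝ) < a := by linarith
  have hr0 : (0:ℝ) ≤ (a - 1) / a := div_nonneg (by linarith) h0.le
  have hr1 : (a - 1) / a < 1 := (div_lt_one h0).2 (by linarith)
  rw [tsum_mul_right, tsum_geometric_of_lt_one hr0 hr1]
  field_simp
  ring

lemma exp_le_one (ha : 1 < a) (d : ℕ → ℕ) (hd : ∀ i, 1 ≤ d i) : alphaExpansion a d ≤ 1 := by
  rw [alphaExpansion_eq, ← tsum_geom ha]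
  have h0 : (0:ℝ) < a := by linarith
  have hr0 : (0:ℝ) ≤ (a - 1) / a := div_nonneg (by linarith) h0.le
  have hr1 : (a - 1) / a < 1 := (div_lt_one h0).2 (by linarith)
  exact Summable.tsum_le_tsum (term_le ha d hd) (summable ha d hd)
    ((summable_geometric_of_lt_one hr0 hr1).mul_right _)

lemma exp_pos (ha : 1 < a) (d : ℕ → ℕ) (hd : ∀ i, 1 ≤ d i) : 0 < alphaExpansion a d := by
  rw [alphaExpansion_eq]
  refine Summable.tsum_pos (summable ha d hd) (term_nonneg ha d) 0 ?_
  have h0 : (0:ℝ) < a := by linarith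
  simp only [term, pow_zero, one_mul]
  exact zpow_pos h0 _

lemma exp_rec (ha : 1 < a) (d : ℕ → ℕ) (hd : ∀ i, 1 ≤ d i) :
    alphaExpansion a d = a ^ (-(d 0 : ℤ)) +
      (a - 1) * a ^ (-(d 0 : ℤ)) * alphaExpansion a (fun i => d (i + 1)) := by
  have h0 : (0:ℝ) < a := by linarith
  have hne : a ≠ 0 := h0.ne'
  rw [alphaExpansion_eq, Summable.tsum_eq_zero_add (summable ha d hd)]
  congr 1
  · simp [term]
  · rw [alphaExpansion_eq, ← tsum_mul_left]
    congr 1 with n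
    have hsum : (∑ j ∈ Finset.range (n + 2), d j) = (∑ j ∈ Finset.range (n + 1), d (j + 1)) + d 0 :=
      Finset.sum_range_succ' d (n + 1)
    simp only [term, hsum]
    push_cast
    rw [neg_add, zpow_add₀ hne]
    ring

lemma exp_ones (ha : 1 < a) : alphaExpansion a (fun _ => 1) = 1 := by
  rw [alphaExpansion_eq, ← tsum_geom ha]
  congr 1 with i
  have hne : a ≠ 0 := by positivity
  simp only [term, Finset.sum_const, Finset.card_range, smul_eq_mul, mul_one]
  rw [zpow_neg, zpow_natCast, div_pow, pow_succ]
  field_simp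

end AE

namespace AE

variable {a : ℝ}

lemma compare_zero (ha : 1 < a) (d e : ℕ → ℕ) (hd : ∀ i, 1 ≤ d i) (he : ∀ i, 1 ≤ e i)
    (h : e 0 < d 0) : alphaExpansion a d < alphaExpansion a e := by
  have h0 : (0:ℝ) < a := by linarith
  have h1 : alphaExpansion a d ≤ a ^ (-(d 0 : ℤ)) + (a - 1) * a ^ (-(d 0 : ℤ)) := by
    rw [exp_rec ha d hd]
    have hX := exp_le_one ha (fun i => d (i + 1)) (fun i => hd (i + 1))
    have hc : (0:ℝ) ≤ (a - 1) * a ^ (-(d 0 : ℤ)) :=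
      mul_nonneg (by linarith) (zpow_pos h0 _).le
    have := mul_nonneg hc (by linarith : (0:ℝ) ≤ 1 - alphaExpansion a (fun i => d (i + 1)))
    nlinarith
  have h2 : a ^ (-(d 0 : ℤ)) + (a - 1) * a ^ (-(d 0 : ℤ)) = a ^ (1 - (d 0 : ℤ)) := by
    rw [show (1 - (d 0:ℤ)) = 1 + (-(d 0:ℤ)) by ring, zpow_add₀ h0.ne', zpow_one]; ring
  have h3 : a ^ (1 - (d 0 : ℤ)) ≤ a ^ (-(e 0 : ℤ)) := by
    apply zpow_le_zpow_right₀ ha.le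
    have : (e 0 : ℤ) + 1 ≤ (d 0 : ℤ) := by exact_mod_cast h
    omega
  have h4 : a ^ (-(e 0 : ℤ)) < alphaExpansion a e := by
    rw [exp_rec ha e he]
    have := mul_pos (mul_pos (by linarith : (0:ℝ) < a - 1) (zpow_pos h0 (-(e 0 : ℤ))))
      (exp_pos ha (fun i => e (i + 1)) (fun i => he (i + 1)))
    linarith
  linarith [h1.trans_eq h2, h3]

lemma compare (ha : 1 < a) (k : ℕ) : ∀ d e : ℕ → ℕ, (∀ i, 1 ≤ d i) → (∀ i, 1 ≤ e i) →
    (∀ j, j < k → d j = e j) → e k < d k → alphaExpansion a d < alphaExpansion a e := by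
  induction k with
  | zero => exact fun d e hd he _ h => compare_zero ha d e hd he h
  | succ m ih =>
    intro d e hd he hpre h
    have h0 : (0:ℝ) < a := by linarith
    have hde0 : d 0 = e 0 := hpre 0 (Nat.succ_pos m)
    rw [exp_rec ha d hd, exp_rec ha e he, hde0]
    have hrec := ih (fun i => d (i + 1)) (fun i => e (i + 1)) (fun i => hd (i + 1))
      (fun i => he (i + 1)) (fun j hj => hpre (j + 1) (by omega)) h
    have hc : 0 < (a - 1) * a ^ (-(e 0 : ℤ)) :=
      mul_pos (by linarith) (zpow_pos h0 _)
    nlinarith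

lemma le_transfer {b : ℝ} (ha : 1 < a) (hb : 1 < b) (d e : ℕ → ℕ)
    (hd : ∀ i, 1 ≤ d i) (he : ∀ i, 1 ≤ e i)
    (hle : alphaExpansion a d ≤ alphaExpansion a e) :
    alphaExpansion b d ≤ alphaExpansion b e := by
  by_contra hlt
  push_neg at hlt
  have hne : d ≠ e := by rintro rfl; exact absurd rfl hlt.ne'
  have hex : ∃ k, d k ≠ e k := Function.ne_iff.1 hne
  set k := Nat.find hex with hk
  have hkspec : d k ≠ e k := Nat.find_spec hex
  have hkmin : ∀ j, j < k → d j = e j := fun j hj => by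
    have := Nat.find_min hex hj; simpa using this
  rcases lt_or_gt_of_ne hkspec with hlt' | hgt'
  · exact absurd (compare ha k e d he hd (fun j hj => (hkmin j hj).symm) hlt') (not_lt.2 hle)
  · exact absurd (compare hb k d e hd he hkmin hgt') (not_lt.2 hlt.le)

end AE

namespace AE

variable {a : ℝ}

noncomputable def digitFun (a x : ℝ) : ℕ := sInf {i : ℕ | a ^ (-(i : ℤ)) < x}

noncomputable def shiftMap (a x : ℝ) : ℝ :=
  (x - a ^ (-(digitFun a x : ℤ))) * a ^ (digitFun a x : ℤ) / (a - 1)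

lemma digit_set_nonempty (ha : 1 < a) {x : ℝ} (hx : 0 < x) :
    {i : ℕ | a ^ (-(i : ℤ)) < x}.Nonempty := by
  have h0 : (0:ℝ) < a := by linarith
  obtain ⟨n, hn⟩ := exists_pow_lt_of_lt_one hx (by
    rw [one_div]; exact inv_lt_one_of_one_lt₀ ha : 1 / a < 1)
  rw [one_div, inv_pow] at hn
  exact ⟨n, by rw [Set.mem_setOf_eq, zpow_neg, zpow_natCast]; exact hn⟩

lemma digit_lt (ha : 1 < a) {x : ℝ} (hx : 0 < x) : a ^ (-(digitFun a x : ℤ)) < x :=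
  Nat.sInf_mem (digit_set_nonempty ha hx)

lemma digit_pos (ha : 1 < a) {x : ℝ} (hx : x ∈ Set.Ioc (0:ℝ) 1) : 1 ≤ digitFun a x := by
  rcases Nat.eq_zero_or_pos (digitFun a x) with h | h
  · have := digit_lt ha hx.1
    rw [h] at this
    simp only [Nat.cast_zero, neg_zero, zpow_zero] at this
    exact absurd hx.2 (not_le.2 this)
  · exact h

lemma digit_min (ha : 1 < a) {x : ℝ} (hx : x ∈ Set.Ioc (0:ℝ) 1) :
    x ≤ a ^ (1 - (digitFun a x : ℤ)) := by
  have h1 := digit_pos ha hx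
  have hnot : digitFun a x - 1 ∉ {i : ℕ | a ^ (-(i : ℤ)) < x} := by
    have h2 : digitFun a x - 1 < digitFun a x := by omega
    exact Nat.notMem_of_lt_sInf h2
  rw [Set.mem_setOf_eq, not_lt] at hnot
  have : ((digitFun a x - 1 : ℕ) : ℤ) = (digitFun a x : ℤ) - 1 := by
    have : 1 ≤ digitFun a x := h1; push_cast [this]; ring
  rw [this] at hnot
  rwa [show (1 - (digitFun a x : ℤ)) = -((digitFun a x : ℤ) - 1) by ring]

lemma shift_step (ha : 1 < a) (x : ℝ) :
    x = a ^ (-(digitFun a x : ℤ)) + (a - 1) * a ^ (-(digitFun a x : ℤ)) * shiftMap a x := by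
  have h0 : (0:ℝ) < a := by linarith
  have hne : a ≠ 0 := h0.ne'
  have h1 : a - 1 ≠ 0 := by linarith
  rw [shiftMap]
  have hz : a ^ (-(digitFun a x : ℤ)) * a ^ ((digitFun a x : ℤ)) = 1 := by
    rw [← zpow_add₀ hne]; simp
  field_simp
  nlinarith [hz, congrArg (HMul.hMul (x - a ^ (-(digitFun a x : ℤ)))) hz]

lemma shift_mem (ha : 1 < a) {x : ℝ} (hx : x ∈ Set.Ioc (0:ℝ) 1) :
    shiftMap a x ∈ Set.Ioc (0:ℝ) 1 := by
  have h0 : (0:ℝ) < a := by linarith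
  have h1 : (0:ℝ) < a - 1 := by linarith
  have hzp : (0:ℝ) < a ^ ((digitFun a x : ℤ)) := zpow_pos h0 _
  have hlt := digit_lt ha hx.1
  constructor
  · apply div_pos (mul_pos (by linarith) hzp) h1
  · rw [shiftMap, div_le_one h1]
    have hmin := digit_min ha hx
    have hz : a ^ (1 - (digitFun a x : ℤ)) * a ^ ((digitFun a x : ℤ)) = a := by
      rw [← zpow_add₀ h0.ne']; simp
    have hz2 : a ^ (-(digitFun a x : ℤ)) * a ^ ((digitFun a x : ℤ)) = 1 := by
      rw [← zpow_add₀ h0.ne']; simp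
    nlinarith [mul_le_mul_of_nonneg_right hmin hzp.le]

/-- digits of the greedy expansion -/
noncomputable def digits (a x : ℝ) (n : ℕ) : ℕ := digitFun a ((shiftMap a)^[n] x)

lemma iterate_mem (ha : 1 < a) {x : ℝ} (hx : x ∈ Set.Ioc (0:ℝ) 1) (n : ℕ) :
    (shiftMap a)^[n] x ∈ Set.Ioc (0:ℝ) 1 := by
  induction n with
  | zero => exact hx
  | succ m ih => rw [Function.iterate_succ_apply']; exact shift_mem ha ih

lemma digits_pos (ha : 1 < a) {x : ℝ} (hx : x ∈ Set.Ioc (0:ℝ) 1) (n : ℕ) :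
    1 ≤ digits a x n := digit_pos ha (iterate_mem ha hx n)

lemma partial_sum_eq (ha : 1 < a) {x : ℝ} (hx : x ∈ Set.Ioc (0:ℝ) 1) (n : ℕ) :
    x = (∑ i ∈ Finset.range n, term a (digits a x) i) +
      (a - 1) ^ n * a ^ (-((∑ j ∈ Finset.range n, digits a x j : ℕ) : ℤ)) *
        (shiftMap a)^[n] x := by
  have h0 : (0:ℝ) < a := by linarith
  induction n with
  | zero => simp
  | succ m ih =>
    have hstep := shift_step ha ((shiftMap a)^[m] x)
    have hdig : digitFun a ((shiftMap a)^[m] x) = digits a x m := rfl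
    rw [hdig] at hstep
    rw [Finset.sum_range_succ, Function.iterate_succ_apply']
    set z := shiftMap a ((shiftMap a)^[m] x) with hzdef
    set y := (shiftMap a)^[m] x with hydef
    have hsum : ((∑ j ∈ Finset.range (m + 1), digits a x j : ℕ) : ℤ)
        = ((∑ j ∈ Finset.range m, digits a x j : ℕ) : ℤ) + (digits a x m : ℤ) := by
      push_cast [Finset.sum_range_succ]; ring
    have hterm : term a (digits a x) m
        = (a - 1) ^ m * a ^ (-((∑ j ∈ Finset.range m, digits a x j : ℕ) : ℤ))
          * a ^ (-(digits a x m : ℤ)) := by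
      rw [term, hsum, neg_add, zpow_add₀ h0.ne']; ring
    calc x = (∑ i ∈ Finset.range m, term a (digits a x) i) +
        (a - 1) ^ m * a ^ (-((∑ j ∈ Finset.range m, digits a x j : ℕ) : ℤ)) * y := ih
    _ = _ := by
      rw [hstep, hterm, hsum, neg_add, zpow_add₀ h0.ne', pow_succ]
      ring

lemma exists_expansion (ha : 1 < a) {x : ℝ} (hx : x ∈ Set.Ioc (0:ℝ) 1) :
    ∃ d : ℕ → ℕ, (∀ i, 1 ≤ d i) ∧ alphaExpansion a d = x := by
  have h0 : (0:ℝ) < a := by linarith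
  refine ⟨digits a x, digits_pos ha hx, ?_⟩
  have hsummable := summable ha (digits a x) (digits_pos ha hx)
  have htends : Filter.Tendsto (fun n => ∑ i ∈ Finset.range n, term a (digits a x) i)
      Filter.atTop (nhds (alphaExpansion a (digits a x))) := by
    rw [alphaExpansion_eq]
    exact hsummable.hasSum.tendsto_sum_nat
  -- remainder tends to zero
  have hrem : Filter.Tendsto
      (fun n => (a - 1) ^ n * a ^ (-((∑ j ∈ Finset.range n, digits a x j : ℕ) : ℤ)) *
        (shiftMap a)^[n] x) Filter.atTop (nhds 0) := by
    have hr0 : (0:ℝ) ≤ (a - 1) / a := div_nonneg (by linarith) h0.le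
    have hr1 : (a - 1) / a < 1 := (div_lt_one h0).2 (by linarith)
    have hgeo : Filter.Tendsto (fun n : ℕ => ((a - 1) / a) ^ n) Filter.atTop (nhds 0) :=
      tendsto_pow_atTop_nhds_zero_of_lt_one hr0 hr1
    refine squeeze_zero (fun n => ?_) (fun n => ?_) hgeo
    · have hmem := iterate_mem ha hx n
      exact mul_nonneg (mul_nonneg (pow_nonneg (by linarith) _) (zpow_pos h0 _).le) hmem.1.le
    · have hmem := iterate_mem ha hx n
      have hS : (n : ℤ) ≤ ((∑ j ∈ Finset.range n, digits a x j : ℕ) : ℤ) := by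
        exact_mod_cast sum_range_ge (digits a x) (digits_pos ha hx) n
      have hz : a ^ (-((∑ j ∈ Finset.range n, digits a x j : ℕ) : ℤ)) ≤ a ^ (-(n : ℤ)) :=
        zpow_le_zpow_right₀ ha.le (by omega)
      have h1 : (a - 1) ^ n * a ^ (-((∑ j ∈ Finset.range n, digits a x j : ℕ) : ℤ)) *
          (shiftMap a)^[n] x ≤ (a - 1) ^ n * a ^ (-(n : ℤ)) * 1 := by
        apply mul_le_mul
        · exact mul_le_mul_of_nonneg_left hz (pow_nonneg (by linarith) _)
        · exact hmem.2
        · exact hmem.1.le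
        · exact mul_nonneg (pow_nonneg (by linarith) _) (zpow_pos h0 _).le
      refine h1.trans_eq ?_
      rw [mul_one, zpow_neg, zpow_natCast, div_pow]
      field_simp
  have : Filter.Tendsto (fun n => ∑ i ∈ Finset.range n, term a (digits a x) i)
      Filter.atTop (nhds x) := by
    have := Filter.Tendsto.const_sub x hrem
    rw [sub_zero] at this
    refine this.congr (fun n => ?_)
    have := partial_sum_eq ha hx n
    linarith
  exact tendsto_nhds_unique htends this

end AE


lemma dimH_graph_le (f : ℝ → ℝ)
    (hmono : ∀ x ∈ Set.Icc (0:ℝ) 1, ∀ y ∈ Set.Icc (0:ℝ) 1, x ≤ y → f x ≤ f y) :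
    dimH {p : ℝ × ℝ | ∃ x ∈ Set.Icc (0:ℝ) 1, p = (x, f x)} ≤ 1 := by
  set S : ℝ → Set ℝ := fun s => insert 0 {x | x ∈ Set.Icc (0:ℝ) 1 ∧ x + f x ≤ s} with hS
  have hbdd : ∀ s, BddAbove (S s) := by
    intro s
    refine ⟨1, ?_⟩
    intro t ht
    rcases Set.mem_insert_iff.1 ht with rfl | ⟨ht1, _⟩
    · norm_num
    · exact ht1.2
  set h : ℝ → ℝ := fun s => sSup (S s) with hh
  have hne : ∀ s, (S s).Nonempty := fun s => ⟨0, Set.mem_insert _ _⟩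
  have h0 : ∀ s, 0 ≤ h s := fun s => le_csSup (hbdd s) (Set.mem_insert _ _)
  have hmem_le : ∀ s t, t ∈ S s → t ≤ h s := fun s t ht => le_csSup (hbdd s) ht
  have hfix : ∀ x, x ∈ Set.Icc (0:ℝ) 1 → h (x + f x) = x := by
    intro x hx
    apply le_antisymm
    · apply csSup_le (hne _)
      intro t ht
      rcases Set.mem_insert_iff.1 ht with rfl | ⟨ht1, hts⟩
      · exact hx.1
      · by_contra hxt
        push_neg at hxt
        have := hmono x hx t ht1 hxt.le
        linarith
    · exact le_csSup (hbdd _) (Set.mem_insert_iff.2 (Or.inr ⟨hx, le_rfl⟩))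
  have hkey : ∀ s t, s ≤ t → h t ≤ h s + (t - s) := by
    intro s t hst
    apply csSup_le (hne _)
    intro u hu
    rcases Set.mem_insert_iff.1 hu with rfl | ⟨hu1, hut⟩
    · have := h0 s; linarith
    · by_contra hcon
      push_neg at hcon
      have hu'0 : 0 ≤ u - (t - s) := by have := h0 s; linarith
      have hu'1 : u - (t - s) ≤ 1 := by have := hu1.2; linarith
      have hfu' : f (u - (t - s)) ≤ f u :=
        hmono _ ⟨hu'0, hu'1⟩ u hu1 (by linarith)
      have hmem : u - (t - s) ∈ S s :=
        Set.mem_insert_iff.2 (Or.inr ⟨⟨hu'0, hu'1⟩, by linarith⟩)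
      have := hmem_le s _ hmem
      linarith
  have hmonoh : ∀ s t, s ≤ t → h s ≤ h t := by
    intro s t hst
    apply csSup_le_csSup (hbdd t) (hne s)
    intro u hu
    rcases Set.mem_insert_iff.1 hu with rfl | ⟨hu1, hus⟩
    · exact Set.mem_insert _ _
    · exact Set.mem_insert_iff.2 (Or.inr ⟨hu1, hus.trans hst⟩)
  have hlip : LipschitzWith 1 h := by
    apply LipschitzWith.of_dist_le_mul
    intro s t
    have habs : ∀ u v : ℝ, h u - h v ≤ |u - v| := by
      intro u v
      rcases le_total u v with huv | huv
      · have h1 := hmonoh u v huv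
        have h2 := abs_nonneg (u - v)
        linarith
      · have h1 := hkey v u huv
        have h2 : u - v ≤ |u - v| := le_abs_self _
        linarith
    rw [Real.dist_eq, Real.dist_eq, NNReal.coe_one, one_mul, abs_sub_le_iff]
    exact ⟨habs s t, by rw [abs_sub_comm]; exact habs t s⟩
  have hgl : LipschitzWith 2 (fun s : ℝ => s - h s) := by
    have h2 := LipschitzWith.id.sub hlip
    norm_num at h2
    exact h2
  have hg : LipschitzWith (max 1 2) (fun s : ℝ => (h s, s - h s)) := hlip.prodMk hgl
  have hsub : {p : ℝ × ℝ | ∃ x ∈ Set.Icc (0:ℝ) 1, p = (x, f x)} ⊆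
      (fun s : ℝ => (h s, s - h s)) '' Set.univ := by
    rintro p ⟨x, hx, rfl⟩
    refine ⟨x + f x, Set.mem_univ _, ?_⟩
    show (h (x + f x), (x + f x) - h (x + f x)) = (x, f x)
    rw [hfix x hx]
    simp
  calc dimH {p : ℝ × ℝ | ∃ x ∈ Set.Icc (0:ℝ) 1, p = (x, f x)}
      ≤ dimH ((fun s : ℝ => (h s, s - h s)) '' Set.univ) := dimH_mono hsub
    _ ≤ dimH (Set.univ : Set ℝ) := hg.dimH_image_le _
    _ = 1 := Real.dimH_univ



theorem base_change_graph_self_affine_dimH_one (α β : ℝ) (hα : 1 < α) (hβ : 1 < β)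
    (f : ℝ → ℝ) (hf0 : f 0 = 0)
    (hf : ∀ d : ℕ → ℕ, (∀ i, 1 ≤ d i) →
      f (alphaExpansion α d) = alphaExpansion β d)
    (F : Set (ℝ × ℝ)) (hF : F = {p : ℝ × ℝ | ∃ x ∈ Set.Icc (0 : ℝ) 1, p = (x, f x)}) :
    F = (⋃ i : ℕ, affG α β (i + 1) '' F) ∪ {((0 : ℝ), (0 : ℝ))} ∧
    dimH F = 1 := by
  have hval : ∀ x ∈ Set.Ioc (0:ℝ) 1, ∃ d : ℕ → ℕ, (∀ i, 1 ≤ d i) ∧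
      alphaExpansion α d = x ∧ f x = alphaExpansion β d := by
    intro x hx
    obtain ⟨d, hd, hdx⟩ := AE.exists_expansion hα hx
    exact ⟨d, hd, hdx, by rw [← hdx]; exact hf d hd⟩
  have hmono : ∀ x ∈ Set.Icc (0:ℝ) 1, ∀ y ∈ Set.Icc (0:ℝ) 1, x ≤ y → f x ≤ f y := by
    intro x hx y hy hxy
    rcases eq_or_lt_of_le hx.1 with hx0 | hx0
    · rw [← hx0, hf0]
      rcases eq_or_lt_of_le hy.1 with hy0 | hy0
      · rw [← hy0, hf0]
      · obtain ⟨e, he, hey, hfy⟩ := hval y ⟨hy0, hy.2⟩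
        rw [hfy]
        exact (AE.exp_pos hβ e he).le
    · obtain ⟨d, hd, hdx, hfx⟩ := hval x ⟨hx0, hx.2⟩
      obtain ⟨e, he, hey, hfy⟩ := hval y ⟨lt_of_lt_of_le hx0 hxy, hy.2⟩
      rw [hfx, hfy]
      exact AE.le_transfer hα hβ d e hd he (by rw [hdx, hey]; exact hxy)
  have hFs : ∀ d : ℕ → ℕ, (∀ i, 1 ≤ d i) → (alphaExpansion α d, alphaExpansion β d) ∈ F := by
    intro d hd
    rw [hF]
    exact ⟨alphaExpansion α d, ⟨(AE.exp_pos hα d hd).le, AE.exp_le_one hα d hd⟩,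
      by rw [hf d hd]⟩
  constructor
  · apply Set.Subset.antisymm
    · -- F ⊆ ⋃ ∪ {0}
      intro p hp
      rw [hF] at hp
      obtain ⟨x, hx, rfl⟩ := hp
      rcases eq_or_lt_of_le hx.1 with hx0 | hx0
      · right
        simp only [Set.mem_singleton_iff]
        rw [← hx0, hf0]
      · left
        obtain ⟨d, hd, hdx, hfx⟩ := hval x ⟨hx0, hx.2⟩
        refine Set.mem_iUnion.2 ⟨d 0 - 1, ?_⟩
        have hd0 : d 0 - 1 + 1 = d 0 := by have := hd 0; omega
        rw [hd0]
        have he : ∀ i, 1 ≤ (fun n => d (n + 1)) i := fun i => hd (i + 1)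
        refine ⟨(alphaExpansion α (fun n => d (n + 1)), alphaExpansion β (fun n => d (n + 1))),
          hFs _ he, ?_⟩
        have h1 := AE.exp_rec hα d hd
        have h2 := AE.exp_rec hβ d hd
        simp only [affG, Prod.mk.injEq]
        constructor
        · rw [← hdx, h1, zpow_neg, zpow_natCast]
          ring
        · rw [hfx, h2, zpow_neg, zpow_natCast]
          ring
    · -- ⋃ ∪ {0} ⊆ F
      intro p hp
      rcases hp with hp | hp
      · rw [Set.mem_iUnion] at hp
        obtain ⟨i, q, hqF, rfl⟩ := hp
        rw [hF] at hqF
        obtain ⟨x, hx, rfl⟩ := hqF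
        rcases eq_or_lt_of_le hx.1 with hx0 | hx0
        · -- x = 0
          have ha0 : (0:ℝ) < α := by linarith
          have hb0 : (0:ℝ) < β := by linarith
          set d : ℕ → ℕ := fun n => if n = 0 then i + 2 else 1 with hddef
          have hd : ∀ n, 1 ≤ d n := by
            intro n
            by_cases hn : n = 0 <;> simp [hddef, hn]
          have htail : (fun n => d (n + 1)) = fun _ => (1:ℕ) := by
            funext n; simp [hddef]
          have h1 : alphaExpansion α d = (α - 1) / α ^ (i+1) * 0 + 1 / α ^ (i+1) := by
            rw [AE.exp_rec hα d hd, htail, AE.exp_ones hα,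
              show d 0 = i + 2 from rfl, zpow_neg, zpow_natCast]
            field_simp
            ring
          have h2 : alphaExpansion β d = (β - 1) / β ^ (i+1) * 0 + 1 / β ^ (i+1) := by
            rw [AE.exp_rec hβ d hd, htail, AE.exp_ones hβ,
              show d 0 = i + 2 from rfl, zpow_neg, zpow_natCast]
            field_simp
            ring
          have heq : affG α β (i + 1) (x, f x) =
              (alphaExpansion α d, alphaExpansion β d) := by
            simp only [affG, ← hx0, hf0, h1, h2]
          rw [heq]
          exact hFs d hd
        · obtain ⟨e, he, hex, hfx⟩ := hval x ⟨hx0, hx.2⟩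
          set d : ℕ → ℕ := fun n => match n with
            | 0 => i + 1
            | Nat.succ m => e m with hddef
          have hd : ∀ n, 1 ≤ d n := by
            intro n
            match n with
            | 0 => simp [hddef]
            | Nat.succ m => simpa [hddef] using he m
          have htail : (fun n => d (n + 1)) = e := rfl
          have hd0 : d 0 = i + 1 := rfl
          have h1 : alphaExpansion α d = (α - 1) / α ^ (i+1) * x + 1 / α ^ (i+1) := by
            rw [AE.exp_rec hα d hd, htail, hd0, hex, zpow_neg, zpow_natCast]
            ring
          have h2 : alphaExpansion β d = (β - 1) / β ^ (i+1) * f x + 1 / β ^ (i+1) := by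
            rw [AE.exp_rec hβ d hd, htail, hd0, ← hfx, zpow_neg, zpow_natCast]
            ring
          have heq : affG α β (i + 1) (x, f x) =
              (alphaExpansion α d, alphaExpansion β d) := by
            simp only [affG, h1, h2]
          rw [heq]
          exact hFs d hd
      · rw [Set.mem_singleton_iff] at hp
        subst hp
        rw [hF]
        exact ⟨0, by norm_num, by rw [hf0]⟩
  · apply le_antisymm
    · rw [hF]
      exact dimH_graph_le f hmono
    · have himg : Prod.fst '' F = Set.Icc (0:ℝ) 1 := by
        rw [hF]
        ext t
        constructor
        · rintro ⟨p, ⟨x, hx, rfl⟩, rfl⟩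
          exact hx
        · intro ht
          exact ⟨(t, f t), ⟨t, ht, rfl⟩, rfl⟩
      have h1 : dimH (Set.Icc (0:ℝ) 1) = 1 := by
        rw [Real.dimH_of_nonempty_interior (by rw [interior_Icc]; exact ⟨1/2, by norm_num⟩)]
        simp
      calc (1:ENNReal) = dimH (Prod.fst '' F) := by rw [himg, h1]
        _ ≤ dimH F := LipschitzWith.prod_fst.dimH_image_le F
end
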